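/- Let N ≥ 1, a ∈ (0,1), λ_j > 0, p an N×N stochastic matrix, and b_j : ℂ → ℂ functions; for z ≠ λ_j set L(z) := diag(λ_j/(λ_j − z)), B(z) := diag(b_j(z)), H(z) := L(z) pᵀ B(z) and F(z) := −Λ^{-1} L(z) with Λ := diag(λ_j). Let D := {s ∈ ℂ : Re s ≥ 0 and a^m s ≠ λ_j for all m ∈ ℕ, j}, let v, π ∈ ℂ^N, and let Z : D → ℂ^N satisfy: (i) Z(s) = H(s) Z(a s) + s F(s) v for all s ∈ D; (ii) Z is continuous at 0 with Z(0) = π. Fix s ∈ D and assume the partial products P_n(s) := ∏_{m=0}^{n−1} H(a^m s) converge entrywise to a matrix Π(s) as n → ∞. Then the series Σ_{n=0}^{∞} a^n P_n(s) (F(a^n s) v) converges and Z(s) = s Σ_{n=0}^{∞} a^n P_n(s) (F(a^n s) v) + Π(s) π. -/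

import Mathlib

open MeasureTheory Matrix Filter

private lemma tendsto_mulVec_aux {N : ℕ} {M : ℕ → Matrix (Fin N) (Fin N) ℂ}
    {w : ℕ → Fin N → ℂ} {M0 : Matrix (Fin N) (Fin N) ℂ} {w0 : Fin N → ℂ}
    (hM : Tendsto M atTop (nhds M0)) (hw : Tendsto w atTop (nhds w0)) :
    Tendsto (fun n => M n *ᵥ w n) atTop (nhds (M0 *ᵥ w0)) := by
  rw [tendsto_pi_nhds]
  intro i
  have hentry : ∀ j, Tendsto (fun n => M n i j) atTop (nhds (M0 i j)) := fun j =>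
    ((Continuous.matrix_elem continuous_id i j).tendsto M0).comp hM
  have hw' : ∀ j, Tendsto (fun n => w n j) atTop (nhds (w0 j)) := fun j =>
    ((continuous_apply j).tendsto w0).comp hw
  simp only [Matrix.mulVec, dotProduct]
  exact tendsto_finset_sum _ (fun j _ => (hentry j).mul (hw' j))

/-- Theorem 2.3 of the paper (equation (2.7)): the series/infinite-product
solution `Z(s) = s Σ_{n} a^n P_n(s) (F(a^n s) v) + Π(s) π` of the fixed-point
functional equation `Z(s) = H(s) Z(a s) + s F(s) v`. -/
theorem stmt_4 (N : ℕ) (hN : 1 ≤ N) (a : ℝ) (ha : a ∈ Set.Ioo (0:ℝ) 1)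
    (lam : Fin N → ℝ) (hlam : ∀ j, 0 < lam j)
    (p : Fin N → Fin N → ℝ) (hp0 : ∀ i j, 0 ≤ p i j) (hp1 : ∀ i, ∑ j, p i j = 1)
    (b : Fin N → ℂ → ℂ)
    (L B H F : ℂ → Matrix (Fin N) (Fin N) ℂ)
    (hL : ∀ z, L z = Matrix.diagonal fun j => (lam j : ℂ) / ((lam j : ℂ) - z))
    (hB : ∀ z, B z = Matrix.diagonal fun j => b j z)
    (hH : ∀ z, H z = L z * (Matrix.of fun i j => (p j i : ℂ)) * B z)
    (hF : ∀ z, F z = -((Matrix.diagonal fun j => (lam j : ℂ))⁻¹ * L z))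
    (D : Set ℂ)
    (hD : D = {z : ℂ | 0 ≤ z.re ∧ ∀ (m : ℕ) (j : Fin N), (a : ℂ) ^ m * z ≠ (lam j : ℂ)})
    (v π : Fin N → ℂ) (Z : ℂ → (Fin N → ℂ))
    (hZeq : ∀ z ∈ D, Z z = H z *ᵥ Z ((a : ℂ) * z) + z • (F z *ᵥ v))
    (hZcont : ContinuousWithinAt Z D 0) (hZ0 : Z 0 = π)
    (s : ℂ) (hs : s ∈ D)
    (Pmat : Matrix (Fin N) (Fin N) ℂ)
    (hPmat : Tendsto (fun n : ℕ => (((List.range n).map fun m => H ((a : ℂ) ^ m * s)).prod))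
            atTop (nhds Pmat)) :
    ∃ T : Fin N → ℂ,
      HasSum (fun n : ℕ => (a : ℂ) ^ n •
          ((((List.range n).map fun m => H ((a : ℂ) ^ m * s)).prod)
            *ᵥ (F ((a : ℂ) ^ n * s) *ᵥ v))) T ∧
      Z s = s • T + Pmat *ᵥ π := by
  set P : ℕ → Matrix (Fin N) (Fin N) ℂ :=
    fun n => (((List.range n).map fun m => H ((a : ℂ) ^ m * s)).prod) with hP
  -- points a^n s lie in D
  have hmem : ∀ n : ℕ, (a : ℂ) ^ n * s ∈ D := by
    intro n
    rw [hD] at hs ⊢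
    refine ⟨?_, ?_⟩
    · have : ((a : ℂ) ^ n * s).re = (a ^ n : ℝ) * s.re := by
        rw [← Complex.ofReal_pow, Complex.re_ofReal_mul]
      rw [this]
      exact mul_nonneg (pow_nonneg ha.1.le n) hs.1
    · intro m j
      have := hs.2 (m + n) j
      rwa [pow_add, mul_assoc] at this
  -- a^n s → 0
  have htend0 : Tendsto (fun n : ℕ => (a : ℂ) ^ n * s) atTop (nhds 0) := by
    have hnorm : ‖(a : ℂ)‖ < 1 := by
      rw [Complex.norm_real, Real.norm_eq_abs, abs_of_pos ha.1]
      exact ha.2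
    have := tendsto_pow_atTop_nhds_zero_of_norm_lt_one hnorm
    simpa using this.mul_const s
  -- Z (a^n s) → π
  have hZtend : Tendsto (fun n : ℕ => Z ((a : ℂ) ^ n * s)) atTop (nhds π) := by
    rw [← hZ0]
    refine hZcont.tendsto.comp ?_
    exact tendsto_nhdsWithin_of_tendsto_nhds_of_eventually_within _ htend0
      (Eventually.of_forall hmem)
  -- F (a^n s) *ᵥ v → F 0 *ᵥ v
  have hFv : Tendsto (fun n : ℕ => F ((a : ℂ) ^ n * s) *ᵥ v) atTop (nhds (F 0 *ᵥ v)) := by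
    have hform : ∀ z : ℂ, F z *ᵥ v =
        -((Matrix.diagonal fun j => (lam j : ℂ))⁻¹ *ᵥ (L z *ᵥ v)) := by
      intro z
      rw [hF z, Matrix.neg_mulVec, Matrix.mulVec_mulVec]
    have hLv : Tendsto (fun n : ℕ => L ((a : ℂ) ^ n * s) *ᵥ v) atTop (nhds (L 0 *ᵥ v)) := by
      rw [tendsto_pi_nhds]
      intro j
      have hentry : ∀ z : ℂ, (L z *ᵥ v) j = (lam j : ℂ) / ((lam j : ℂ) - z) * v j := by
        intro z
        rw [hL z, Matrix.mulVec_diagonal]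
      simp only [hentry]
      have hlamne : ((lam j : ℂ) - 0) ≠ 0 := by
        simpa using Complex.ofReal_ne_zero.mpr (hlam j).ne'
      exact (((tendsto_const_nhds.div (tendsto_const_nhds.sub htend0) hlamne)).mul
        tendsto_const_nhds)
    simp only [hform]
    have hcont : Continuous fun x : Fin N → ℂ =>
        -((Matrix.diagonal fun j => (lam j : ℂ))⁻¹ *ᵥ x) :=
      (Continuous.matrix_mulVec continuous_const continuous_id).neg
    exact (hcont.tendsto _).comp hLv
  -- the terms of the series
  set t : ℕ → Fin N → ℂ :=
    fun n => (a : ℂ) ^ n • (P n *ᵥ (F ((a : ℂ) ^ n * s) *ᵥ v)) with ht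
  -- w n = P n *ᵥ (F (a^n s) *ᵥ v) converges, hence is bounded
  have hwconv : Tendsto (fun n : ℕ => P n *ᵥ (F ((a : ℂ) ^ n * s) *ᵥ v)) atTop
      (nhds (Pmat *ᵥ (F 0 *ᵥ v))) := tendsto_mulVec_aux hPmat hFv
  have hbdd : ∃ C : ℝ, ∀ n : ℕ, ‖P n *ᵥ (F ((a : ℂ) ^ n * s) *ᵥ v)‖ ≤ C := by
    obtain ⟨C, hC⟩ := hwconv.norm.bddAbove_range
    exact ⟨C, fun n => hC ⟨n, rfl⟩⟩
  obtain ⟨C, hC⟩ := hbdd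
  have hCnonneg : 0 ≤ C := le_trans (norm_nonneg _) (hC 0)
  have hsummable : Summable t := by
    refine Summable.of_norm_bounded (g := fun n => C * a ^ n) ?_ ?_
    · exact (summable_geometric_of_lt_one ha.1.le ha.2).mul_left C
    · intro n
      show ‖t n‖ ≤ C * a ^ n
      simp only [ht]
      have hna : ‖(a : ℂ) ^ n‖ = a ^ n := by
        rw [norm_pow, Complex.norm_real, Real.norm_eq_abs, abs_of_pos ha.1]
      rw [norm_smul, hna, mul_comm C]
      exact mul_le_mul_of_nonneg_left (hC n) (pow_nonneg ha.1.le n)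
  obtain ⟨T, hT⟩ := hsummable
  refine ⟨T, hT, ?_⟩
  -- the finite-n identity
  have hiter : ∀ n : ℕ,
      Z s = P n *ᵥ Z ((a : ℂ) ^ n * s) + s • ∑ m ∈ Finset.range n, t m := by
    intro n
    induction n with
    | zero => simp [hP]
    | succ n ih =>
      have hstep := hZeq ((a : ℂ) ^ n * s) (hmem n)
      have hpow : (a : ℂ) * ((a : ℂ) ^ n * s) = (a : ℂ) ^ (n + 1) * s := by ring
      rw [hpow] at hstep
      have hPsucc : P (n + 1) = P n * H ((a : ℂ) ^ n * s) := by
        rw [hP]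
        simp [List.range_succ]
      rw [ih, hstep]
      rw [Matrix.mulVec_add, Matrix.mulVec_smul, Matrix.mulVec_mulVec, ← hPsucc]
      rw [Finset.sum_range_succ, smul_add]
      have hsw : ((a : ℂ) ^ n * s) • (P n *ᵥ (F ((a : ℂ) ^ n * s) *ᵥ v)) = s • t n := by
        simp only [ht, smul_smul]
        congr 1
        ring
      rw [hsw]
      abel
  -- take limits on both sides
  have hlim1 : Tendsto (fun n : ℕ => P n *ᵥ Z ((a : ℂ) ^ n * s) + s • ∑ m ∈ Finset.range n, t m)
      atTop (nhds (Pmat *ᵥ π + s • T)) := by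
    refine Tendsto.add (tendsto_mulVec_aux hPmat hZtend) ?_
    exact (hT.tendsto_sum_nat).const_smul s
  have hlim2 : Tendsto (fun _ : ℕ => Z s) atTop (nhds (Z s)) := tendsto_const_nhds
  have : Z s = Pmat *ᵥ π + s • T := by
    refine tendsto_nhds_unique ?_ hlim1
    simpa only [← hiter] using hlim2
  rw [this, add_comm]
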